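/- arXiv:1906.00849 — 2 statements merged into one kernel-verified Lean document; each statement's English description precedes it below -/
import Mathlib

section
/- The set of codes of ℵ₁-trees on ω₁ is an ω₁-Borel subset of 2^{ω₁}. -/
noncomputable section

open Set

/-- The ordinal `ω₁`. -/
abbrev omega1Ord : Ordinal := (Cardinal.aleph 1).ord

/-- `ω₁`, the first uncountable ordinal, as a type. -/
abbrev Omega1 : Type := omega1Ord.ToType

open Classical in
/-- The height of a node `b` in the tree given by the strict order `r`:
the order type of the set of `r`-predecessors of `b`. -/
noncomputable def treeHeight {α : Type} (r : α → α → Prop) (b : α) : Ordinal :=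
  if h : IsWellOrder {a // r a b} (fun x y => r x.1 y.1) then
    @Ordinal.type {a // r a b} (fun x y => r x.1 y.1) h
  else 0

/-- The level `ξ` of the tree given by `r`: the set of nodes of height `ξ`. -/
def treeLevel {α : Type} (r : α → α → Prop) (ξ : Ordinal) : Set α :=
  {b | treeHeight r b = ξ}

/-- `r` is a (strict) tree order: it is transitive and irreflexive, and the set of
predecessors of any node is well-ordered by `r`. -/
structure IsTreeOrder {α : Type} (r : α → α → Prop) : Prop where
  trans : ∀ a b c, r a b → r b c → r a c
  irrefl : ∀ a, ¬ r a a
  pred_trichot : ∀ a b c, r a c → r b c → (r a b ∨ a = b ∨ r b a)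
  pred_wellOrdered : ∀ c, ∀ S : Set α, (∀ a ∈ S, r a c) → S.Nonempty →
    ∃ m ∈ S, ∀ a ∈ S, m = a ∨ r m a

/-- An `ℵ₁`-tree on `ω₁`: a tree order all of whose levels are countable,
with the levels below `ω₁` nonempty and the levels from `ω₁` onwards empty. -/
structure IsAleph1Tree (r : Omega1 → Omega1 → Prop) : Prop where
  toIsTreeOrder : IsTreeOrder r
  level_countable : ∀ ξ : Ordinal, (treeLevel r ξ).Countable
  level_nonempty : ∀ ξ : Ordinal, ξ < omega1Ord → (treeLevel r ξ).Nonempty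
  level_empty_of_ge : ∀ ξ : Ordinal, omega1Ord ≤ ξ → treeLevel r ξ = ∅

/-- `t` is an immediate successor of `s`. -/
def ImmSucc {α : Type} (r : α → α → Prop) (s t : α) : Prop :=
  r s t ∧ ¬ ∃ u, r s u ∧ r u t

/-- A regular tree on `ω₁`: an `ℵ₁`-tree which is rooted, in which every node has
at least two immediate successors, and which is pruned. -/
structure IsRegularTree (r : Omega1 → Omega1 → Prop) : Prop where
  toIsAleph1Tree : IsAleph1Tree r
  rooted : ∃ rt, ∀ a, a = rt ∨ r rt a
  binBranching : ∀ s, ∃ t₁ t₂, t₁ ≠ t₂ ∧ ImmSucc r s t₁ ∧ ImmSucc r s t₂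
  pruned : ∀ s, ∀ γ : Ordinal, treeHeight r s < γ → γ < omega1Ord →
    ∃ t, r s t ∧ treeHeight r t = γ

/-- `c` is a chain with respect to `r`. -/
def IsChainIn {α : Type} (r : α → α → Prop) (c : Set α) : Prop :=
  ∀ a ∈ c, ∀ b ∈ c, a = b ∨ r a b ∨ r b a

/-- `c` is an antichain with respect to `r`. -/
def IsAntichainIn {α : Type} (r : α → α → Prop) (c : Set α) : Prop :=
  ∀ a ∈ c, ∀ b ∈ c, a ≠ b → ¬ r a b ∧ ¬ r b a

/-- A branch: a maximal chain. -/
def IsBranchIn {α : Type} (r : α → α → Prop) (c : Set α) : Prop :=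
  IsChainIn r c ∧ ∀ c', IsChainIn r c' → c ⊆ c' → c = c'

/-- An Aronszajn tree: an `ℵ₁`-tree with no uncountable chain. -/
def IsAronszajnTree (r : Omega1 → Omega1 → Prop) : Prop :=
  IsAleph1Tree r ∧ ∀ c : Set Omega1, IsChainIn r c → c.Countable

/-- A Suslin tree: an Aronszajn tree with no uncountable antichain. -/
def IsSuslinTree (r : Omega1 → Omega1 → Prop) : Prop :=
  IsAronszajnTree r ∧ ∀ c : Set Omega1, IsAntichainIn r c → c.Countable

/-- A special Aronszajn tree: an Aronszajn tree which is the union of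
countably many antichains. -/
def IsSpecialAronszajnTree (r : Omega1 → Omega1 → Prop) : Prop :=
  IsAronszajnTree r ∧
    ∃ A : ℕ → Set Omega1, (∀ n, IsAntichainIn r (A n)) ∧ (⋃ n, A n) = Set.univ

/-- A Kurepa tree: an `ℵ₁`-tree with at least `ℵ₂` uncountable branches. -/
def IsKurepaTree (r : Omega1 → Omega1 → Prop) : Prop :=
  IsAleph1Tree r ∧
    Cardinal.aleph 2 ≤ Cardinal.mk {c : Set Omega1 // IsBranchIn r c ∧ ¬ c.Countable}

/-- A fixed bijection `ω₁ × ω₁ ≃ ω₁`. -/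
def pairEquiv : Omega1 × Omega1 ≃ Omega1 := Classical.choice <| by
  rw [← Cardinal.eq]
  have h1 : Cardinal.mk Omega1 = Cardinal.aleph 1 := by
    rw [Cardinal.mk_toType, Cardinal.card_ord]
  simp only [Cardinal.mk_prod, Cardinal.lift_id, h1]
  exact Cardinal.mul_eq_self (Cardinal.aleph0_le_aleph 1)

/-- The tree relation on `ω₁` coded by `x : 2^{ω₁}` via the fixed pairing bijection. -/
def codedRel (x : Omega1 → Bool) : Omega1 → Omega1 → Prop :=
  fun a b => x (pairEquiv (a, b)) = true

/-- `x` is a code of a regular tree on `ω₁`. -/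
def IsRegularTreeCode (x : Omega1 → Bool) : Prop := IsRegularTree (codedRel x)

/-! ### The generalized Baire space topology -/

/-- The basic open set `[p]` determined by a partial function `p`. -/
def gbsBasic {I X : Type} (p : I → Option X) : Set (I → X) :=
  {x | ∀ i : I, ∀ y : X, p i = some y → x i = y}

/-- `p` is a countable partial function, i.e. it has countable support. -/
def CtblSupp {I X : Type} (p : I → Option X) : Prop :=
  {i | p i ≠ none}.Countable

/-- The topology on `X^I` generated by the sets `[p]` for countable partial
functions `p`. -/
def gbsTop (I X : Type) : TopologicalSpace (I → X) :=
  TopologicalSpace.generateFrom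
    {s | ∃ p : I → Option X, CtblSupp p ∧ s = gbsBasic p}

/-- The `ω₁`-Borel subsets of a topological space: the smallest family containing
the open sets and closed under complements and unions of `ℵ₁`-many sets. -/
inductive IsOmega1Borel {β : Type} (t : TopologicalSpace β) : Set β → Prop
  | basic (s : Set β) : t.IsOpen s → IsOmega1Borel t s
  | compl (s : Set β) : IsOmega1Borel t s → IsOmega1Borel t sᶜ
  | iUnion (f : Omega1 → Set β) : (∀ i, IsOmega1Borel t (f i)) →
      IsOmega1Borel t (⋃ i, f i)

/-- `A` is `Π¹₁`: there is an open `B ⊆ β × ω₁^{ω₁}` with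
`x ∈ A ↔ ∀ g, (x, g) ∈ B`. -/
def IsPi11 {β : Type} (t : TopologicalSpace β) (A : Set β) : Prop :=
  ∃ B : Set (β × (Omega1 → Omega1)),
    (@instTopologicalSpaceProd β (Omega1 → Omega1) t (gbsTop Omega1 Omega1)).IsOpen B ∧
    ∀ x, x ∈ A ↔ ∀ g : Omega1 → Omega1, (x, g) ∈ B

/-- `A` is `Σ¹₁`: its complement is `Π¹₁`. -/
def IsSigma11 {β : Type} (t : TopologicalSpace β) (A : Set β) : Prop :=
  IsPi11 t Aᶜ

/-- `A` is `Δ¹₁`: both `Σ¹₁` and `Π¹₁`. -/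
def IsDelta11 {β : Type} (t : TopologicalSpace β) (A : Set β) : Prop :=
  IsPi11 t A ∧ IsSigma11 t A

/-! ### Meagerness and the Baire property -/

/-- `s` is nowhere dense with respect to the topology `t`. -/
def IsNwdIn {β : Type} (t : TopologicalSpace β) (s : Set β) : Prop :=
  @interior β t (@closure β t s) = ∅

/-- `s` is (`ω₁`-)meager: it is covered by `ℵ₁`-many nowhere dense sets. -/
def IsOmega1Meager {β : Type} (t : TopologicalSpace β) (s : Set β) : Prop :=
  ∃ f : Omega1 → Set β, (∀ i, IsNwdIn t (f i)) ∧ s ⊆ ⋃ i, f i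

/-- `s` has the Baire property: its symmetric difference with some open set is meager. -/
def HasBaireProperty {β : Type} (t : TopologicalSpace β) (s : Set β) : Prop :=
  ∃ o : Set β, t.IsOpen o ∧ IsOmega1Meager t ((s \ o) ∪ (o \ s))

/-! ### The space of regular trees -/

/-- The space of (codes of) regular trees on `ω₁`. -/
abbrev RegTreeSpace : Type := {x : Omega1 → Bool // IsRegularTreeCode x}

/-- The subspace topology on the space of regular trees. -/
def regTreeTop : TopologicalSpace RegTreeSpace :=
  TopologicalSpace.induced (fun z => z.1) (gbsTop Omega1 Bool)

/-- The trace of the basic open set `[p]` on the space of regular trees. -/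
def regTreeBasic (p : Omega1 → Option Bool) : Set RegTreeSpace :=
  {z | z.1 ∈ gbsBasic p}

/-- Two tree relations on `ω₁` are isomorphic. -/
def TreeIso (r r' : Omega1 → Omega1 → Prop) : Prop :=
  ∃ e : Omega1 ≃ Omega1, ∀ a b, r a b ↔ r' (e a) (e b)

/-! ### Clubs, stationary sets and diamonds -/

/-- `C ⊆ ω₁` is club: it is unbounded and contains all of its limit points. -/
def IsClubIn (C : Set Omega1) : Prop :=
  (∀ a : Omega1, ∃ b ∈ C, a < b) ∧
  (∀ a : Omega1, (∃ b, b < a) → (∀ b, b < a → ∃ c ∈ C, b < c ∧ c < a) → a ∈ C)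

/-- `X ⊆ ω₁` is stationary: it meets every club. -/
def IsStationarySet (X : Set Omega1) : Prop :=
  ∀ C : Set Omega1, IsClubIn C → (X ∩ C).Nonempty

/-- The diamond-plus principle `◊⁺` on `ω₁`. -/
def DiamondPlus : Prop :=
  ∃ A : Omega1 → Set (Set Omega1),
    (∀ α, (A α).Countable) ∧
    ∀ X : Set Omega1, ∃ C : Set Omega1, IsClubIn C ∧
      ∀ α ∈ C, (C ∩ {b | b < α}) ∈ A α ∧ (X ∩ {b | b < α}) ∈ A α

/-! ### Completeness -/

/-- `A ⊆ 2^{ω₁}` is `Π¹₁`-complete. -/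
def IsPi11Complete (A : Set (Omega1 → Bool)) : Prop :=
  IsPi11 (gbsTop Omega1 Bool) A ∧
  ∀ S : Set (Omega1 → Bool), IsPi11 (gbsTop Omega1 Bool) S →
    ∃ π : (Omega1 → Bool) → Omega1 → Bool,
      @Continuous _ _ (gbsTop Omega1 Bool) (gbsTop Omega1 Bool) π ∧
      ∀ x, x ∈ S ↔ π x ∈ A

/-- `A ⊆ 2^{ω₁}` is `Σ¹₁`-complete. -/
def IsSigma11Complete (A : Set (Omega1 → Bool)) : Prop :=
  IsSigma11 (gbsTop Omega1 Bool) A ∧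
  ∀ S : Set (Omega1 → Bool), IsSigma11 (gbsTop Omega1 Bool) S →
    ∃ π : (Omega1 → Bool) → Omega1 → Bool,
      @Continuous _ _ (gbsTop Omega1 Bool) (gbsTop Omega1 Bool) π ∧
      ∀ x, x ∈ S ↔ π x ∈ A

/-- The set of codes of stationary subsets of `ω₁`, as a subset of `2^{ω₁}`. -/
def StatCodes : Set (Omega1 → Bool) := {x | IsStationarySet {a | x a = true}}


/-! ### Auxiliary development -/

abbrev oLT : Omega1 → Omega1 → Prop := (· < ·)
instance instWO : IsWellOrder Omega1 oLT := isWellOrder_lt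
theorem type_oLT : Ordinal.type oLT = omega1Ord := Ordinal.type_toType _
def ordOf (b : Omega1) : Ordinal.{0} := Ordinal.typein oLT b
theorem ordOf_lt (b : Omega1) : ordOf b < omega1Ord := by
  have := Ordinal.typein_lt_type oLT b
  rwa [type_oLT] at this
theorem ordOf_surj {β : Ordinal.{0}} (h : β < omega1Ord) : ∃ b, ordOf b = β := by
  have : β < Ordinal.type oLT := by rwa [type_oLT]
  exact Ordinal.typein_surj _ this
theorem ordOf_lt_ordOf {a b : Omega1} : ordOf a < ordOf b ↔ a < b :=
  Ordinal.typein_lt_typein _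
theorem nontrivial_Omega1 : Nontrivial Omega1 := by
  rw [← Cardinal.one_lt_iff_nontrivial, Cardinal.mk_ord_toType]
  exact lt_trans Cardinal.one_lt_aleph0 Cardinal.aleph0_lt_aleph_one
theorem Iio_countable (b : Omega1) : (Set.Iio b).Countable := by
  rw [Cardinal.countable_iff_lt_aleph_one]
  have h1 : Cardinal.mk (Set.Iio b) = (Ordinal.typein oLT b).card :=
    @Ordinal.card_typein Omega1 oLT _ b
  rw [h1]
  exact Cardinal.lt_ord.1 (ordOf_lt b)
theorem Iic_countable (b : Omega1) : (Set.Iic b).Countable := by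
  rw [← Set.Iio_union_right]
  exact (Iio_countable b).union (Set.countable_singleton b)

theorem countable_bddAbove {S : Set Omega1} (hS : S.Countable) : ∃ β, ∀ c ∈ S, c ≤ β := by
  by_contra h
  push_neg at h
  have huniv : (Set.univ : Set Omega1) ⊆ ⋃ c ∈ S, Set.Iic c := by
    intro b _
    obtain ⟨c, hc, hbc⟩ := h b
    exact Set.mem_biUnion hc (le_of_lt hbc)
  have hcount : (Set.univ : Set Omega1).Countable :=
    Set.Countable.mono huniv (hS.biUnion fun c _ => Iic_countable c)
  have : Countable Omega1 := Set.countable_univ_iff.1 hcount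
  have h2 : Cardinal.mk Omega1 ≤ Cardinal.aleph0 := Cardinal.mk_le_aleph0
  rw [Cardinal.mk_ord_toType] at h2
  exact absurd (lt_of_lt_of_le Cardinal.aleph0_lt_aleph_one h2) (lt_irrefl _)

/-- The `α`-th stage of the rank computation for the relation coded by `x`:
`x ∈ stage α c` iff every `codedRel x`-predecessor of `c` is in some earlier stage. -/
def stage (α : Ordinal.{0}) (c : Omega1) : Set (Omega1 → Bool) :=
  {x | ∀ a : Omega1, codedRel x a c → ∃ β : Ordinal.{0}, ∃ _ : β < α, x ∈ stage β a}
termination_by α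

theorem mem_stage {α c} {x : Omega1 → Bool} :
    x ∈ stage α c ↔ ∀ a : Omega1, codedRel x a c → ∃ β, β < α ∧ x ∈ stage β a := by
  rw [stage]
  exact forall_congr' fun a => imp_congr Iff.rfl (exists_congr fun β => exists_prop)

/-- Minimality extraction from stages. -/
theorem stage_min {x : Omega1 → Bool} {c α} (hst : x ∈ stage α c) (S : Set Omega1)
    (hS : ∀ a ∈ S, codedRel x a c) (hne : S.Nonempty) :
    ∃ m ∈ S, ∀ a ∈ S, ¬ codedRel x a m := by
  classical
  set T : Set Ordinal := {β | ∃ a ∈ S, x ∈ stage β a} with hT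
  have hTne : T.Nonempty := by
    obtain ⟨a, ha⟩ := hne
    obtain ⟨β, hβ, hb⟩ := mem_stage.1 hst a (hS a ha)
    exact ⟨β, a, ha, hb⟩
  obtain ⟨β₀, hβ₀T, hβ₀min⟩ := wellFounded_lt.has_min T hTne
  obtain ⟨m, hmS, hmst⟩ := hβ₀T
  refine ⟨m, hmS, fun a haS hram => ?_⟩
  obtain ⟨γ, hγ, hγst⟩ := mem_stage.1 hmst a hram
  exact hβ₀min γ ⟨a, haS, hγst⟩ hγ

theorem stage_least {x : Omega1 → Bool} {c α} (hst : x ∈ stage α c)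
    (htri : ∀ a b c, codedRel x a c → codedRel x b c →
      (codedRel x a b ∨ a = b ∨ codedRel x b a))
    (S : Set Omega1) (hS : ∀ a ∈ S, codedRel x a c) (hne : S.Nonempty) :
    ∃ m ∈ S, ∀ a ∈ S, m = a ∨ codedRel x m a := by
  obtain ⟨m, hmS, hmin⟩ := stage_min hst S hS hne
  refine ⟨m, hmS, fun a haS => ?_⟩
  rcases htri m a c (hS m hmS) (hS a haS) with h | h | h
  · exact Or.inr h
  · exact Or.inl h
  · exact absurd h (hmin a haS)

/-- Under a tree order, the predecessors of any node are well-ordered. -/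
theorem IsTreeOrder.isWellOrder {r : Omega1 → Omega1 → Prop} (T : IsTreeOrder r) (c : Omega1) :
    IsWellOrder {a // r a c} (fun p q => r p.1 q.1) := by
  haveI : IsTrichotomous {a // r a c} (fun p q => r p.1 q.1) := by
    constructor
    intro p q
    intro hpq hqp
    rcases T.pred_trichot p.1 q.1 c p.2 q.2 with h | h | h
    · exact absurd h hpq
    · exact Subtype.ext h
    · exact absurd h hqp
  haveI : IsTrans {a // r a c} (fun p q => r p.1 q.1) := by
    constructor
    intro p q u hpq hqu
    exact T.trans _ _ _ hpq hqu
  haveI : IsWellFounded {a // r a c} (fun p q => r p.1 q.1) := by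
    constructor
    rw [WellFounded.wellFounded_iff_has_min]
    intro s hs
    have hS : ∀ a ∈ Subtype.val '' s, r a c := by
      rintro a ⟨p, _, rfl⟩; exact p.2
    obtain ⟨m, hmS, hleast⟩ := T.pred_wellOrdered c (Subtype.val '' s) hS
      (hs.image Subtype.val)
    obtain ⟨m', hm's, hm'⟩ := hmS
    refine ⟨m', hm's, fun p hps hrp => ?_⟩
    rcases hleast p.1 ⟨p, hps, rfl⟩ with h | h
    · rw [hm', h] at hrp; exact T.irrefl _ hrp
    · rw [← hm'] at h; exact T.irrefl _ (T.trans _ _ _ hrp h)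
  constructor

theorem treeHeight_eq {r : Omega1 → Omega1 → Prop} (T : IsTreeOrder r) (c : Omega1) :
    treeHeight r c = @Ordinal.type {a // r a c} (fun p q => r p.1 q.1) (T.isWellOrder c) := by
  rw [treeHeight, dif_pos (T.isWellOrder c)]

theorem treeHeight_pred {r : Omega1 → Omega1 → Prop} (T : IsTreeOrder r) {a c : Omega1}
    (hac : r a c) :
    treeHeight r a =
      @Ordinal.typein {b // r b c} (fun p q => r p.1 q.1) (T.isWellOrder c) ⟨a, hac⟩ := by
  haveI := T.isWellOrder c
  haveI := T.isWellOrder a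
  rw [treeHeight_eq T a,
    ← Ordinal.type_subrel (fun p q : {b // r b c} => r p.1 q.1) ⟨a, hac⟩]
  refine Ordinal.type_eq.2 ⟨⟨⟨fun p => ⟨⟨p.1, T.trans _ _ _ p.2 hac⟩, p.2⟩,
    fun q => ⟨q.1.1, q.2⟩, fun p => rfl, fun q => rfl⟩, Iff.rfl⟩⟩

theorem treeHeight_lt {r : Omega1 → Omega1 → Prop} (T : IsTreeOrder r) {a c : Omega1}
    (hac : r a c) : treeHeight r a < treeHeight r c := by
  haveI := T.isWellOrder c
  rw [treeHeight_pred T hac, treeHeight_eq T c]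
  exact Ordinal.typein_lt_type _ _

theorem exists_treeHeight_eq {r : Omega1 → Omega1 → Prop} (T : IsTreeOrder r) {c : Omega1}
    {β : Ordinal.{0}} (hβ : β < treeHeight r c) : ∃ a, r a c ∧ treeHeight r a = β := by
  haveI := T.isWellOrder c
  rw [treeHeight_eq T c] at hβ
  obtain ⟨p, hp⟩ := Ordinal.typein_surj _ hβ
  exact ⟨p.1, p.2, by rw [treeHeight_pred T p.2]; exact hp⟩

theorem mem_stage_iff {x : Omega1 → Bool} (T : IsTreeOrder (codedRel x)) (α : Ordinal.{0}) :
    ∀ c, x ∈ stage α c ↔ treeHeight (codedRel x) c ≤ α := by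
  induction α using Ordinal.induction with
  | _ α IH =>
    intro c
    constructor
    · intro hx
      by_contra hlt
      push_neg at hlt
      obtain ⟨a, hac, ha⟩ := exists_treeHeight_eq T hlt
      obtain ⟨β, hβ, hst⟩ := mem_stage.1 hx a hac
      have h2 := (IH β hβ a).1 hst
      rw [ha] at h2
      exact absurd (lt_of_le_of_lt h2 hβ) (lt_irrefl _)
    · intro hle
      rw [mem_stage]
      intro a hac
      have h1 : treeHeight (codedRel x) a < α := lt_of_lt_of_le (treeHeight_lt T hac) hle
      exact ⟨_, h1, (IH _ h1 a).2 le_rfl⟩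

theorem exact_iff {x : Omega1 → Bool} (T : IsTreeOrder (codedRel x)) (ξ c : Omega1) :
    (x ∈ stage (ordOf ξ) c ∧ ∀ η, η < ξ → x ∉ stage (ordOf η) c) ↔
      treeHeight (codedRel x) c = ordOf ξ := by
  constructor
  · rintro ⟨h1, h2⟩
    have hle := (mem_stage_iff T _ c).1 h1
    rcases lt_or_eq_of_le hle with hlt | heq
    · obtain ⟨η, hη⟩ := ordOf_surj (lt_trans hlt (ordOf_lt ξ))
      have hηξ : η < ξ := ordOf_lt_ordOf.1 (by rw [hη]; exact hlt)
      exact absurd ((mem_stage_iff T _ c).2 (le_of_eq hη.symm)) (h2 η hηξ)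
    · exact heq
  · intro heq
    refine ⟨(mem_stage_iff T _ c).2 (le_of_eq heq), fun η hηξ hst => ?_⟩
    have h3 := (mem_stage_iff T _ c).1 hst
    rw [heq] at h3
    exact absurd (lt_of_le_of_lt h3 (ordOf_lt_ordOf.2 hηξ)) (lt_irrefl _)

/-- `x` puts `c` exactly at level `ξ`. -/
def ESp (x : Omega1 → Bool) (ξ c : Omega1) : Prop :=
  x ∈ stage (ordOf ξ) c ∧ ∀ η, η < ξ → x ∉ stage (ordOf η) c

theorem main_iff (x : Omega1 → Bool) :
    IsAleph1Tree (codedRel x) ↔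
      ((∀ a b c, codedRel x a b → codedRel x b c → codedRel x a c) ∧
       (∀ a, ¬ codedRel x a a) ∧
       (∀ a b c, codedRel x a c → codedRel x b c →
         (codedRel x a b ∨ a = b ∨ codedRel x b a)) ∧
       (∀ c, ∃ ξ : Omega1, x ∈ stage (ordOf ξ) c) ∧
       (∀ ξ : Omega1, ∃ β : Omega1, ∀ c, ESp x ξ c → c ≤ β) ∧
       (∀ ξ : Omega1, ∃ c, ESp x ξ c)) := by
  constructor
  · intro A
    have T := A.toIsTreeOrder
    refine ⟨T.trans, T.irrefl, T.pred_trichot, ?_, ?_, ?_⟩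
    · intro c
      have hlt : treeHeight (codedRel x) c < omega1Ord := by
        by_contra h
        push_neg at h
        have he := A.level_empty_of_ge _ h
        have hm : c ∈ treeLevel (codedRel x) (treeHeight (codedRel x) c) := rfl
        rw [he] at hm
        exact hm
      obtain ⟨ξ, hξ⟩ := ordOf_surj hlt
      exact ⟨ξ, (mem_stage_iff T _ c).2 (le_of_eq hξ.symm)⟩
    · intro ξ
      obtain ⟨β, hβ⟩ := countable_bddAbove (A.level_countable (ordOf ξ))
      exact ⟨β, fun c hc => hβ c ((exact_iff T ξ c).1 hc)⟩
    · intro ξ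
      obtain ⟨c, hc⟩ := A.level_nonempty (ordOf ξ) (ordOf_lt ξ)
      exact ⟨c, (exact_iff T ξ c).2 hc⟩
  · rintro ⟨h1, h2, h3, h4, h5, h6⟩
    have T : IsTreeOrder (codedRel x) := by
      refine ⟨h1, h2, h3, ?_⟩
      intro c S hS hne
      obtain ⟨ξ, hst⟩ := h4 c
      exact stage_least hst h3 S hS hne
    have hht : ∀ c, treeHeight (codedRel x) c < omega1Ord := by
      intro c
      obtain ⟨ξ, hst⟩ := h4 c
      exact lt_of_le_of_lt ((mem_stage_iff T _ c).1 hst) (ordOf_lt ξ)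
    refine ⟨T, ?_, ?_, ?_⟩
    · intro ζ
      rcases lt_or_ge ζ omega1Ord with hζ | hζ
      · obtain ⟨ξ, hξ⟩ := ordOf_surj hζ
        obtain ⟨β, hβ⟩ := h5 ξ
        apply (Iic_countable β).mono
        intro c hc
        have hc' : treeHeight (codedRel x) c = ζ := hc
        refine hβ c ((exact_iff T ξ c).2 ?_)
        rw [hξ]
        exact hc'
      · have he : treeLevel (codedRel x) ζ = ∅ := by
          rw [Set.eq_empty_iff_forall_notMem]
          intro c hc
          have hc' : treeHeight (codedRel x) c = ζ := hc
          have := hht c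
          rw [hc'] at this
          exact absurd (lt_of_lt_of_le this hζ) (lt_irrefl _)
        rw [he]
        exact Set.countable_empty
    · intro ζ hζ
      obtain ⟨ξ, hξ⟩ := ordOf_surj hζ
      obtain ⟨c, hc⟩ := h6 ξ
      refine ⟨c, ?_⟩
      have := (exact_iff T ξ c).1 hc
      show treeHeight (codedRel x) c = ζ
      rw [← hξ]
      exact this
    · intro ζ hζ
      rw [Set.eq_empty_iff_forall_notMem]
      intro c hc
      have hc' : treeHeight (codedRel x) c = ζ := hc
      have := hht c
      rw [hc'] at this
      exact absurd (lt_of_lt_of_le this hζ) (lt_irrefl _)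

abbrev gbt : TopologicalSpace (Omega1 → Bool) := gbsTop Omega1 Bool

theorem isOpen_coord (e : Omega1) (v : Bool) : gbt.IsOpen {x : Omega1 → Bool | x e = v} := by
  classical
  have hmem : {x : Omega1 → Bool | x e = v} ∈
      {s | ∃ p : Omega1 → Option Bool, CtblSupp p ∧ s = gbsBasic p} := by
    refine ⟨fun i => if i = e then some v else none, ?_, ?_⟩
    · apply Set.Countable.mono _ (Set.countable_singleton e)
      intro i hi
      simp only [Set.mem_setOf_eq] at hi
      by_contra h
      have h' : ¬ i = e := fun hh => h (by simp [hh])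
      rw [if_neg h'] at hi
      exact hi rfl
    · ext x
      constructor
      · intro hx i y hy
        have hy' : (if i = e then some v else none) = some y := hy
        by_cases h : i = e
        · subst h
          rw [if_pos rfl] at hy'
          have := Option.some.inj hy'
          rw [← this]
          exact hx
        · rw [if_neg h] at hy'
          cases hy'
      · intro hx
        exact hx e v (show (if e = e then some v else none) = some v by rw [if_pos rfl])
  exact TopologicalSpace.GenerateOpen.basic _ hmem

theorem borel_iInter {f : Omega1 → Set (Omega1 → Bool)}
    (h : ∀ i, IsOmega1Borel gbt (f i)) : IsOmega1Borel gbt (⋂ i, f i) := by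
  have h2 := IsOmega1Borel.compl _
    (IsOmega1Borel.iUnion (fun i => (f i)ᶜ) fun i => IsOmega1Borel.compl _ (h i))
  simpa [Set.compl_iUnion] using h2

theorem borel_union2 {A B : Set (Omega1 → Bool)} (hA : IsOmega1Borel gbt A)
    (hB : IsOmega1Borel gbt B) : IsOmega1Borel gbt (A ∪ B) := by
  classical
  haveI := nontrivial_Omega1
  obtain ⟨i0, j0, hij⟩ := exists_pair_ne Omega1
  have he : A ∪ B = ⋃ k : Omega1, if k = i0 then A else B := by
    ext x
    simp only [Set.mem_iUnion, Set.mem_union]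
    constructor
    · rintro (h | h)
      · exact ⟨i0, by rw [if_pos rfl]; exact h⟩
      · exact ⟨j0, by rw [if_neg (Ne.symm hij)]; exact h⟩
    · rintro ⟨k, hk⟩
      by_cases h : k = i0
      · rw [if_pos h] at hk; exact Or.inl hk
      · rw [if_neg h] at hk; exact Or.inr hk
  rw [he]
  refine IsOmega1Borel.iUnion _ fun k => ?_
  by_cases h : k = i0
  · rw [if_pos h]; exact hA
  · rw [if_neg h]; exact hB

theorem borel_inter2 {A B : Set (Omega1 → Bool)} (hA : IsOmega1Borel gbt A)
    (hB : IsOmega1Borel gbt B) : IsOmega1Borel gbt (A ∩ B) := by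
  have h2 := IsOmega1Borel.compl _
    (borel_union2 (IsOmega1Borel.compl _ hA) (IsOmega1Borel.compl _ hB))
  simpa [Set.compl_union] using h2

theorem borel_const (p : Prop) : IsOmega1Borel gbt {x : Omega1 → Bool | p} := by
  by_cases h : p
  · have e : {x : Omega1 → Bool | p} = Set.univ := by ext; simp [h]
    rw [e]
    exact IsOmega1Borel.basic _ gbt.isOpen_univ
  · have e : {x : Omega1 → Bool | p} = ∅ := by ext; simp [h]
    rw [e]
    exact IsOmega1Borel.basic _ (@isOpen_empty _ gbt)

theorem borel_R (a b : Omega1) : IsOmega1Borel gbt {x | codedRel x a b} :=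
  IsOmega1Borel.basic _ (isOpen_coord (pairEquiv (a, b)) true)

theorem borel_N (a b : Omega1) : IsOmega1Borel gbt {x | ¬ codedRel x a b} := by
  have e : {x | ¬ codedRel x a b} = {x : Omega1 → Bool | x (pairEquiv (a, b)) = false} := by
    ext x
    simp [codedRel]
  rw [e]
  exact IsOmega1Borel.basic _ (isOpen_coord (pairEquiv (a, b)) false)

theorem stage_eq_of_le {α : Ordinal.{0}} (hα : α ≤ omega1Ord) (c : Omega1) :
    stage α c = ⋂ a : Omega1, ({x | ¬ codedRel x a c} ∪
      ⋃ i : Omega1, if ordOf i < α then stage (ordOf i) a else ∅) := by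
  classical
  ext x
  rw [mem_stage]
  simp only [Set.mem_iInter, Set.mem_union, Set.mem_setOf_eq, Set.mem_iUnion]
  refine forall_congr' fun a => ?_
  constructor
  · intro h
    by_cases hr : codedRel x a c
    · obtain ⟨β, hβ, hst⟩ := h hr
      obtain ⟨i, hi⟩ := ordOf_surj (lt_of_lt_of_le hβ hα)
      refine Or.inr ⟨i, ?_⟩
      rw [if_pos (by rw [hi]; exact hβ), hi]
      exact hst
    · exact Or.inl hr
  · rintro (h | ⟨i, hi⟩) hr
    · exact absurd hr h
    · by_cases h : ordOf i < α
      · rw [if_pos h] at hi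
        exact ⟨ordOf i, h, hi⟩
      · rw [if_neg h] at hi
        exact absurd hi (Set.notMem_empty x)

theorem borel_stage : ∀ α : Ordinal.{0}, α ≤ omega1Ord → ∀ c, IsOmega1Borel gbt (stage α c) := by
  intro α
  induction α using Ordinal.induction with
  | _ α IH =>
    intro hα c
    rw [stage_eq_of_le hα c]
    refine borel_iInter fun a => borel_union2 (borel_N a c)
      (IsOmega1Borel.iUnion _ fun i => ?_)
    by_cases h : ordOf i < α
    · rw [if_pos h]
      exact IH _ h (ordOf_lt i).le a
    · rw [if_neg h]
      exact IsOmega1Borel.basic _ (@isOpen_empty _ gbt)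

/-- The set of codes putting `c` exactly at level `ξ`. -/
def ESet (ξ c : Omega1) : Set (Omega1 → Bool) :=
  stage (ordOf ξ) c ∩ (⋃ η : Omega1, if η < ξ then stage (ordOf η) c else ∅)ᶜ

theorem mem_ESet {x : Omega1 → Bool} {ξ c : Omega1} : x ∈ ESet ξ c ↔ ESp x ξ c := by
  classical
  simp only [ESet, ESp, Set.mem_inter_iff, Set.mem_compl_iff, Set.mem_iUnion, not_exists]
  refine and_congr Iff.rfl (forall_congr' fun η => ?_)
  by_cases h : η < ξ
  · rw [if_pos h]
    simp [h]
  · rw [if_neg h]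
    simp [h]

theorem borel_ESet (ξ c : Omega1) : IsOmega1Borel gbt (ESet ξ c) := by
  classical
  refine borel_inter2 (borel_stage _ (ordOf_lt ξ).le c)
    (IsOmega1Borel.compl _ (IsOmega1Borel.iUnion _ fun η => ?_))
  by_cases h : η < ξ
  · rw [if_pos h]
    exact borel_stage _ (ordOf_lt η).le c
  · rw [if_neg h]
    exact IsOmega1Borel.basic _ (@isOpen_empty _ gbt)

def TS1 : Set (Omega1 → Bool) :=
  ⋂ a, ⋂ b, ⋂ c, ({x | ¬ codedRel x a b} ∪ ({x | ¬ codedRel x b c} ∪ {x | codedRel x a c}))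

def TS2 : Set (Omega1 → Bool) := ⋂ a, {x | ¬ codedRel x a a}

def TS3 : Set (Omega1 → Bool) :=
  ⋂ a, ⋂ b, ⋂ c, ({x | ¬ codedRel x a c} ∪ ({x | ¬ codedRel x b c} ∪
    ({x | codedRel x a b} ∪ ({x : Omega1 → Bool | a = b} ∪ {x | codedRel x b a}))))

def TS4 : Set (Omega1 → Bool) := ⋂ c, ⋃ ξ : Omega1, stage (ordOf ξ) c

def TS5 : Set (Omega1 → Bool) :=
  ⋂ ξ : Omega1, ⋃ β : Omega1, ⋂ c, ((ESet ξ c)ᶜ ∪ {x : Omega1 → Bool | c ≤ β})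

def TS6 : Set (Omega1 → Bool) := ⋂ ξ : Omega1, ⋃ c, ESet ξ c

theorem mem_TS1 {x : Omega1 → Bool} :
    x ∈ TS1 ↔ ∀ a b c, codedRel x a b → codedRel x b c → codedRel x a c := by
  simp only [TS1, Set.mem_iInter, Set.mem_union, Set.mem_setOf_eq]
  exact forall_congr' fun a => forall_congr' fun b => forall_congr' fun c => by tauto

theorem mem_TS2 {x : Omega1 → Bool} : x ∈ TS2 ↔ ∀ a, ¬ codedRel x a a := by
  simp only [TS2, Set.mem_iInter, Set.mem_setOf_eq]

theorem mem_TS3 {x : Omega1 → Bool} :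
    x ∈ TS3 ↔ ∀ a b c, codedRel x a c → codedRel x b c →
      (codedRel x a b ∨ a = b ∨ codedRel x b a) := by
  simp only [TS3, Set.mem_iInter, Set.mem_union, Set.mem_setOf_eq]
  exact forall_congr' fun a => forall_congr' fun b => forall_congr' fun c => by tauto

theorem mem_TS4 {x : Omega1 → Bool} :
    x ∈ TS4 ↔ ∀ c, ∃ ξ : Omega1, x ∈ stage (ordOf ξ) c := by
  simp only [TS4, Set.mem_iInter, Set.mem_iUnion]

theorem mem_TS5 {x : Omega1 → Bool} :
    x ∈ TS5 ↔ ∀ ξ : Omega1, ∃ β : Omega1, ∀ c, ESp x ξ c → c ≤ β := by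
  simp only [TS5, Set.mem_iInter, Set.mem_iUnion, Set.mem_union, Set.mem_compl_iff,
    Set.mem_setOf_eq]
  refine forall_congr' fun ξ => exists_congr fun β => forall_congr' fun c => ?_
  rw [mem_ESet]
  tauto

theorem mem_TS6 {x : Omega1 → Bool} :
    x ∈ TS6 ↔ ∀ ξ : Omega1, ∃ c, ESp x ξ c := by
  simp only [TS6, Set.mem_iInter, Set.mem_iUnion]
  exact forall_congr' fun ξ => exists_congr fun c => mem_ESet

theorem borel_TS1 : IsOmega1Borel gbt TS1 :=
  borel_iInter fun a => borel_iInter fun b => borel_iInter fun c =>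
    borel_union2 (borel_N a b) (borel_union2 (borel_N b c) (borel_R a c))

theorem borel_TS2 : IsOmega1Borel gbt TS2 :=
  borel_iInter fun a => borel_N a a

theorem borel_TS3 : IsOmega1Borel gbt TS3 :=
  borel_iInter fun a => borel_iInter fun b => borel_iInter fun c =>
    borel_union2 (borel_N a c) (borel_union2 (borel_N b c)
      (borel_union2 (borel_R a b) (borel_union2 (borel_const _) (borel_R b a))))

theorem borel_TS4 : IsOmega1Borel gbt TS4 :=
  borel_iInter fun c => IsOmega1Borel.iUnion _ fun ξ => borel_stage _ (ordOf_lt ξ).le c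

theorem borel_TS5 : IsOmega1Borel gbt TS5 :=
  borel_iInter fun ξ => IsOmega1Borel.iUnion _ fun β => borel_iInter fun c =>
    borel_union2 (IsOmega1Borel.compl _ (borel_ESet ξ c)) (borel_const _)

theorem borel_TS6 : IsOmega1Borel gbt TS6 :=
  borel_iInter fun ξ => IsOmega1Borel.iUnion _ fun c => borel_ESet ξ c

/-- The set of codes of `ℵ₁`-trees on `ω₁` is an `ω₁`-Borel subset of `2^{ω₁}`. -/
theorem statement_0 :
    IsOmega1Borel (gbsTop Omega1 Bool)
      {x : Omega1 → Bool | IsAleph1Tree (codedRel x)} := by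
  have hset : {x : Omega1 → Bool | IsAleph1Tree (codedRel x)} =
      TS1 ∩ (TS2 ∩ (TS3 ∩ (TS4 ∩ (TS5 ∩ TS6)))) := by
    ext x
    simp only [Set.mem_inter_iff, Set.mem_setOf_eq, mem_TS1, mem_TS2, mem_TS3, mem_TS4,
      mem_TS5, mem_TS6]
    exact main_iff x
  rw [hset]
  exact borel_inter2 borel_TS1 (borel_inter2 borel_TS2 (borel_inter2 borel_TS3
    (borel_inter2 borel_TS4 (borel_inter2 borel_TS5 borel_TS6))))

end
end

section
/- The class 𝒮 of (codes of) regular Suslin trees is a Π¹₁ subset of 2^{ω₁}: there is an open set B ⊆ 2^{ω₁} × ω₁^{ω₁} such that a code T belongs to 𝒮 if and only if (T, g) ∈ B for every g ∈ ω₁^{ω₁}. -/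
noncomputable section

open Set

/-! ### Auxiliary development for `statement_2` -/

namespace St2

open Cardinal Ordinal

attribute [local instance] Classical.propDecidable

lemma mk_Omega1 : #Omega1 = Cardinal.aleph 1 := by
  rw [Cardinal.mk_toType, Cardinal.card_ord]

instance : Infinite Omega1 := by
  rw [Cardinal.infinite_iff, mk_Omega1]; exact Cardinal.aleph0_le_aleph 1

noncomputable def nu : ℕ ↪ Omega1 := Infinite.natEmbedding Omega1

noncomputable def natOf (b : Omega1) : ℕ :=
  if h : ∃ n, nu n = b then h.choose else 0

lemma natOf_nu (n : ℕ) : natOf (nu n) = n := by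
  have h : ∃ m, nu m = nu n := ⟨n, rfl⟩
  simp only [natOf, dif_pos h]
  exact nu.injective h.choose_spec

lemma nu_ne {m n : ℕ} (h : m ≠ n) : nu m ≠ nu n := fun e => h (nu.injective e)

/-- Packing two coordinates into one. -/
noncomputable def pc (a b : Omega1) : Omega1 := pairEquiv (a, b)

lemma pc_inj {a b a' b' : Omega1} (h : pc a b = pc a' b') : a = a' ∧ b = b' := by
  have h2 := pairEquiv.injective h
  exact ⟨congrArg Prod.fst h2, congrArg Prod.snd h2⟩

lemma pc_symm (a b : Omega1) : pairEquiv.symm (pc a b) = (a, b) :=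
  Equiv.symm_apply_apply pairEquiv (a, b)

lemma pc_ne_tag {m n : ℕ} {a b : Omega1} (h : m ≠ n) : pc (nu m) a ≠ pc (nu n) b :=
  fun e => nu_ne h (pc_inj e).1

noncomputable def cS : Omega1 := pc (nu 0) (nu 0)
noncomputable def c1 : Omega1 := pc (nu 0) (nu 1)
noncomputable def c2 : Omega1 := pc (nu 0) (nu 2)
noncomputable def seqSlot (n : ℕ) : Omega1 := pc (nu 1) (nu n)
noncomputable def rootSlot (a : Omega1) : Omega1 := pc (nu 2) a
noncomputable def uSlot (a : Omega1) : Omega1 := pc (nu 3) a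
noncomputable def iotaSlot (a : Omega1) : Omega1 := pc (nu 5) a
noncomputable def chainSlot (a : Omega1) : Omega1 := pc (nu 6) a
noncomputable def antiSlot (a : Omega1) : Omega1 := pc (nu 7) a

lemma c1_ne_cS : c1 ≠ cS := fun e => by simpa using nu_ne (by norm_num) (pc_inj e).2
lemma c2_ne_cS : c2 ≠ cS := fun e => by simpa using nu_ne (by norm_num) (pc_inj e).2
lemma c2_ne_c1 : c2 ≠ c1 := fun e => by simpa using nu_ne (by norm_num) (pc_inj e).2
lemma seqSlot_ne_cS (n : ℕ) : seqSlot n ≠ cS := pc_ne_tag (by norm_num)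
lemma uSlot_ne_cS (a : Omega1) : uSlot a ≠ cS := pc_ne_tag (by norm_num)
lemma iotaSlot_ne_cS (a : Omega1) : iotaSlot a ≠ cS := pc_ne_tag (by norm_num)

/-! ### The failure witnesses -/

def V1 (x : Omega1 → Bool) (g : Omega1 → Omega1) : Prop :=
  codedRel x (g cS) (g c1) ∧ codedRel x (g c1) (g c2) ∧ ¬ codedRel x (g cS) (g c2)

def V2 (x : Omega1 → Bool) (g : Omega1 → Omega1) : Prop :=
  codedRel x (g cS) (g cS)

def V3 (x : Omega1 → Bool) (g : Omega1 → Omega1) : Prop :=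
  codedRel x (g cS) (g c2) ∧ codedRel x (g c1) (g c2) ∧ ¬ codedRel x (g cS) (g c1) ∧
    g cS ≠ g c1 ∧ ¬ codedRel x (g c1) (g cS)

def V4 (x : Omega1 → Bool) (g : Omega1 → Omega1) : Prop :=
  ∀ n : ℕ, codedRel x (g (seqSlot n)) (g cS) ∧
    codedRel x (g (seqSlot (n+1))) (g (seqSlot n))

def V5 (x : Omega1 → Bool) (g : Omega1 → Omega1) : Prop :=
  ∀ a : Omega1, g (rootSlot a) ≠ a ∧ ¬ codedRel x a (g (rootSlot a))

def V6 (x : Omega1 → Bool) (g : Omega1 → Omega1) : Prop :=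
  ∀ t₁ t₂ : Omega1, t₁ ≠ t₂ →
    (¬ codedRel x (g cS) t₁ ∨ ¬ codedRel x (g cS) t₂ ∨
      (codedRel x (g cS) (g (uSlot t₁)) ∧ codedRel x (g (uSlot t₁)) t₁) ∨
      (codedRel x (g cS) (g (uSlot t₂)) ∧ codedRel x (g (uSlot t₂)) t₂))

def V7 (x : Omega1 → Bool) (g : Omega1 → Omega1) : Prop :=
  ∀ a b : Omega1,
    (codedRel x (g cS) a → g (iotaSlot a) ∈ Set.range nu) ∧
    (codedRel x (g cS) a → codedRel x (g cS) b → a ≠ b →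
      g (iotaSlot a) ≠ g (iotaSlot b))

def V8 (x : Omega1 → Bool) (g : Omega1 → Omega1) : Prop :=
  ∀ i j : Omega1, i ≠ j →
    (g (chainSlot i) ≠ g (chainSlot j) ∧
      (codedRel x (g (chainSlot i)) (g (chainSlot j)) ∨
        codedRel x (g (chainSlot j)) (g (chainSlot i))))

def V9 (x : Omega1 → Bool) (g : Omega1 → Omega1) : Prop :=
  ∀ i j : Omega1, i ≠ j →
    (g (antiSlot i) ≠ g (antiSlot j) ∧
      ¬ codedRel x (g (antiSlot i)) (g (antiSlot j)) ∧
      ¬ codedRel x (g (antiSlot j)) (g (antiSlot i)))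

def W (x : Omega1 → Bool) (g : Omega1 → Omega1) : Prop :=
  V1 x g ∨ V2 x g ∨ V3 x g ∨ V4 x g ∨ V5 x g ∨ V6 x g ∨ V7 x g ∨ V8 x g ∨ V9 x g

/-! ### Tree combinatorics -/

variable {r : Omega1 → Omega1 → Prop}

/-- The order on the set of predecessors of `b`. -/
abbrev predRel (r : Omega1 → Omega1 → Prop) (b : Omega1) :
    {a // r a b} → {a // r a b} → Prop :=
  fun u v => r u.1 v.1

lemma wopred (hT : IsTreeOrder r) (b : Omega1) :
    IsWellOrder {a // r a b} (predRel r b) := by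
  haveI : IsTrichotomous {a // r a b} (predRel r b) := ⟨fun u v => by
    rcases hT.pred_trichot u.1 v.1 b u.2 v.2 with h | h | h
    exacts [fun h1 _ => absurd h h1, fun _ _ => Subtype.ext h, fun _ h2 => absurd h h2]⟩
  haveI : IsTrans {a // r a b} (predRel r b) := ⟨fun u v w h1 h2 => hT.trans _ _ _ h1 h2⟩
  haveI : IsWellFounded {a // r a b} (predRel r b) := ⟨by
    rw [WellFounded.wellFounded_iff_has_min]
    intro S hS
    obtain ⟨m, hm, hmin⟩ := hT.pred_wellOrdered b (Subtype.val '' S)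
      (by rintro a ⟨u, hu, rfl⟩; exact u.2) (hS.image _)
    obtain ⟨u, huS, hum⟩ := hm
    refine ⟨u, huS, fun v hv hvu => ?_⟩
    have hvu' : r v.1 u.1 := hvu
    rw [hum] at hvu'
    rcases hmin v.1 ⟨v, hv, rfl⟩ with h | h
    · rw [h] at hvu'
      exact hT.irrefl _ hvu'
    · exact hT.irrefl _ (hT.trans _ _ _ h hvu')⟩
  exact ⟨⟩

lemma treeHeight_eq (hT : IsTreeOrder r) (b : Omega1) :
    treeHeight r b = @Ordinal.type _ (predRel r b) (wopred hT b) := by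
  unfold treeHeight
  rw [dif_pos (wopred hT b)]

lemma treeHeight_lt (hT : IsTreeOrder r) {a b : Omega1} (hab : r a b) :
    treeHeight r a < treeHeight r b := by
  letI := wopred hT a
  letI := wopred hT b
  rw [treeHeight_eq hT a, treeHeight_eq hT b]
  refine PrincipalSeg.ordinal_type_lt
    (⟨⟨⟨fun u => ⟨u.1, hT.trans _ _ _ u.2 hab⟩, fun u v h => by
        have h2 := congrArg Subtype.val h
        exact Subtype.ext h2⟩, Iff.rfl⟩, ⟨a, hab⟩, fun v => ?_⟩ :
      PrincipalSeg (predRel r a) (predRel r b))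
  constructor
  · rintro ⟨u, rfl⟩
    exact u.2
  · intro h
    exact ⟨⟨v.1, h⟩, Subtype.ext rfl⟩

lemma rel_of_height_lt (hT : IsTreeOrder r) {s u t : Omega1}
    (hst : r s t) (hut : r u t) (h : treeHeight r s < treeHeight r u) : r s u := by
  rcases hT.pred_trichot s u t hst hut with h' | h' | h'
  · exact h'
  · subst h'; exact absurd h (lt_irrefl _)
  · exact absurd h (not_lt.mpr (le_of_lt (treeHeight_lt hT h')))

lemma treeHeight_lt_omega1 (hT : IsTreeOrder r) {b : Omega1}
    (hc : {a | r a b}.Countable) : treeHeight r b < omega1Ord := by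
  rw [treeHeight_eq hT b, Cardinal.lt_ord, Ordinal.card_type]
  exact lt_of_le_of_lt hc.le_aleph0 Cardinal.aleph0_lt_aleph_one

lemma exists_height_eq (hT : IsTreeOrder r) {t : Omega1} {β : Ordinal}
    (hβ : β < treeHeight r t) : ∃ u, r u t ∧ treeHeight r u = β := by
  letI := wopred hT t
  rw [treeHeight_eq hT t] at hβ
  obtain ⟨u, hu⟩ := Ordinal.typein_surj (predRel r t) hβ
  refine ⟨u.1, u.2, ?_⟩
  letI := wopred hT u.1
  rw [treeHeight_eq hT u.1, ← hu, ← Ordinal.type_subrel]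
  refine RelIso.ordinal_type_eq ⟨⟨fun c => ⟨⟨c.1, hT.trans _ _ _ c.2 u.2⟩, c.2⟩,
    fun c => ⟨c.1.1, c.2⟩, fun c => rfl, fun c => rfl⟩, Iff.rfl⟩

lemma treeHeight_eq_zero_of_root (hT : IsTreeOrder r) {rt : Omega1}
    (hrt : ∀ a, a = rt ∨ r rt a) : treeHeight r rt = 0 := by
  letI := wopred hT rt
  rw [treeHeight_eq hT rt]
  haveI : IsEmpty {a // r a rt} := ⟨fun u => by
    rcases hrt u.1 with h | h
    · have h2 := u.2
      rw [h] at h2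
      exact hT.irrefl rt h2
    · exact hT.irrefl rt (hT.trans _ _ _ h u.2)⟩
  exact Ordinal.type_eq_zero_of_empty _

lemma mem_level_self (b : Omega1) : b ∈ treeLevel r (treeHeight r b) := rfl

lemma level_isAntichain (hT : IsTreeOrder r) (ξ : Ordinal) :
    IsAntichainIn r (treeLevel r ξ) := by
  intro a ha b hb hne
  have ha' : treeHeight r a = ξ := ha
  have hb' : treeHeight r b = ξ := hb
  constructor
  · intro h
    have h2 := treeHeight_lt hT h
    rw [ha', hb'] at h2
    exact lt_irrefl _ h2
  · intro h
    have h2 := treeHeight_lt hT h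
    rw [ha', hb'] at h2
    exact lt_irrefl _ h2

lemma pred_isChain (hT : IsTreeOrder r) (b : Omega1) : IsChainIn r {a | r a b} := by
  intro a ha c hc
  rcases hT.pred_trichot a c b ha hc with h | h | h
  exacts [Or.inr (Or.inl h), Or.inl h, Or.inr (Or.inr h)]

/-! ### Cardinality facts -/

lemma countable_Iio_ordinal {γ : Ordinal} (h : γ < omega1Ord) :
    (Set.Iio γ).Countable := by
  have hcard : γ.card ≤ ℵ₀ := by
    have h2 := Cardinal.lt_ord.mp h
    rwa [← Cardinal.succ_aleph0, Order.lt_succ_iff] at h2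
  have h3 : #(Set.Iio γ) ≤ ℵ₀ := by
    rw [Ordinal.mk_Iio_ordinal]
    exact Cardinal.lift_le_aleph0.mpr hcard
  exact Cardinal.le_aleph0_iff_set_countable.mp h3

lemma not_countable_Iio_omega1 : ¬ (Set.Iio omega1Ord).Countable := by
  intro h
  have h2 := h.le_aleph0
  rw [Ordinal.mk_Iio_ordinal, Cardinal.card_ord, Cardinal.lift_le_aleph0] at h2
  exact absurd h2 (not_le.mpr Cardinal.aleph0_lt_aleph_one)

lemma exists_inj_of_not_countable {C : Set Omega1} (h : ¬ C.Countable) :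
    ∃ f : Omega1 → Omega1, Function.Injective f ∧ ∀ i, f i ∈ C := by
  have h1 : Cardinal.aleph 1 ≤ #C := by
    rw [← Cardinal.succ_aleph0, Order.succ_le_iff]
    exact not_le.mp fun hle => h (Cardinal.le_aleph0_iff_set_countable.mp hle)
  rw [← mk_Omega1] at h1
  obtain ⟨emb⟩ := (Cardinal.le_def _ _).mp h1
  exact ⟨fun i => (emb i).1, fun i j hij => emb.injective (Subtype.ext hij),
    fun i => (emb i).2⟩

lemma not_countable_of_inj {C : Set Omega1} {f : Omega1 → Omega1}
    (hf : Function.Injective f) (hr : ∀ i, f i ∈ C) : ¬ C.Countable := by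
  intro hC
  haveI := hC.to_subtype
  have hinj : Function.Injective fun i => (⟨f i, hr i⟩ : C) :=
    fun i j hij => hf (congrArg Subtype.val hij)
  haveI : Countable Omega1 := Function.Injective.countable hinj
  have h2 : #Omega1 ≤ ℵ₀ := Cardinal.mk_le_aleph0
  rw [mk_Omega1] at h2
  exact absurd h2 (not_le.mpr Cardinal.aleph0_lt_aleph_one)

lemma exists_iota {K : Set Omega1} (hK : K.Countable) :
    ∃ ι : Omega1 → Omega1, (∀ a ∈ K, ι a ∈ Set.range nu) ∧ Set.InjOn ι K := by
  obtain ⟨f, hf⟩ := Set.countable_iff_exists_injOn.mp hK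
  exact ⟨fun a => nu (f a), fun a _ => ⟨f a, rfl⟩,
    fun a ha b hb h => hf ha hb (nu.injective h)⟩

/-! ### The two key counting lemmas about the set of nodes above `s` -/

lemma above_not_countable (hT : IsTreeOrder r)
    (hempty : ∀ ξ : Ordinal, omega1Ord ≤ ξ → treeLevel r ξ = ∅)
    (hpruned : ∀ s, ∀ γ : Ordinal, treeHeight r s < γ → γ < omega1Ord →
      ∃ t, r s t ∧ treeHeight r t = γ)
    (s : Omega1) : ¬ {t | r s t}.Countable := by
  intro hK
  have hs : treeHeight r s < omega1Ord := by
    by_contra hh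
    have h2 := hempty _ (not_lt.mp hh)
    have h3 := mem_level_self (r := r) s
    rw [h2] at h3
    exact h3
  have hsub : Set.Iio omega1Ord ⊆
      (treeHeight r '' {t | r s t}) ∪ Set.Iic (treeHeight r s) := by
    intro γ hγ
    rcases le_or_gt γ (treeHeight r s) with h | h
    · exact Or.inr h
    · obtain ⟨t, hst, ht⟩ := hpruned s γ h hγ
      exact Or.inl ⟨t, hst, ht⟩
  have hIic : (Set.Iic (treeHeight r s)).Countable := by
    have he : Set.Iic (treeHeight r s) = Set.Iio (Order.succ (treeHeight r s)) :=
      (Order.Iio_succ _).symm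
    rw [he]
    exact countable_Iio_ordinal
      ((Cardinal.isSuccLimit_ord (Cardinal.aleph0_le_aleph 1)).succ_lt hs)
  exact not_countable_Iio_omega1 (Set.Countable.mono hsub ((hK.image _).union hIic))

lemma above_countable_of_unpruned (hT : IsTreeOrder r)
    (hS2 : ∀ c : Set Omega1, IsAntichainIn r c → c.Countable)
    {s : Omega1} {γ : Ordinal} (hγ : γ < omega1Ord) (hsγ : treeHeight r s < γ)
    (hno : ∀ t, r s t → treeHeight r t ≠ γ) : {t | r s t}.Countable := by
  have hbound : ∀ t, r s t → treeHeight r t < γ := by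
    intro t hst
    rcases lt_trichotomy (treeHeight r t) γ with h | h | h
    · exact h
    · exact absurd h (hno t hst)
    · obtain ⟨u, hut, hu⟩ := exists_height_eq hT h
      have hsu : r s u := rel_of_height_lt hT hst hut (by rw [hu]; exact hsγ)
      exact absurd hu (hno u hsu)
  have hsub : {t | r s t} ⊆ ⋃ β ∈ Set.Iio γ, treeLevel r β := by
    intro t ht
    exact Set.mem_biUnion (hbound t ht) rfl
  exact Set.Countable.mono hsub
    ((countable_Iio_ordinal hγ).biUnion fun β _ => hS2 _ (level_isAntichain hT β))

end St2
namespace St2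

open Cardinal Ordinal

attribute [local instance] Classical.propDecidable

/-! ### Soundness: a genuine regular Suslin tree admits no failure witness -/

theorem sound {x : Omega1 → Bool}
    (hx : IsRegularTreeCode x ∧ IsSuslinTree (codedRel x))
    (g : Omega1 → Omega1) : ¬ W x g := by
  obtain ⟨hReg, hSus⟩ := hx
  have hT : IsTreeOrder (codedRel x) := hReg.toIsAleph1Tree.toIsTreeOrder
  rintro (h | h | h | h | h | h | h | h | h)
  · exact h.2.2 (hT.trans _ _ _ h.1 h.2.1)
  · exact hT.irrefl _ h
  · obtain ⟨h1, h2, h3, h4, h5⟩ := h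
    rcases hT.pred_trichot _ _ _ h1 h2 with h' | h' | h'
    exacts [h3 h', h4 h', h5 h']
  · obtain ⟨m, hmS, hmin⟩ := hT.pred_wellOrdered (g cS)
      (Set.range fun n => g (seqSlot n))
      (by rintro a ⟨n, rfl⟩; exact (h n).1) ⟨_, ⟨0, rfl⟩⟩
    obtain ⟨k, rfl⟩ := hmS
    rcases hmin (g (seqSlot (k+1))) ⟨k+1, rfl⟩ with h' | h'
    · have h'' : g (seqSlot k) = g (seqSlot (k+1)) := h'
      have h2 := (h k).2
      rw [h''] at h2
      exact hT.irrefl _ h2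
    · have h'' : codedRel x (g (seqSlot k)) (g (seqSlot (k+1))) := h'
      exact hT.irrefl _ (hT.trans _ _ _ h'' (h k).2)
  · obtain ⟨rt, hrt⟩ := hReg.rooted
    obtain ⟨h1, h2⟩ := h rt
    rcases hrt (g (rootSlot rt)) with h' | h'
    exacts [h1 h', h2 h']
  · obtain ⟨t₁, t₂, hne, i1, i2⟩ := hReg.binBranching (g cS)
    rcases h t₁ t₂ hne with h' | h' | ⟨hu1, hu2⟩ | ⟨hu1, hu2⟩
    exacts [h' i1.1, h' i2.1, i1.2 ⟨_, hu1, hu2⟩, i2.2 ⟨_, hu1, hu2⟩]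
  · have hK := above_not_countable hT hReg.toIsAleph1Tree.level_empty_of_ge
      hReg.pruned (g cS)
    apply hK
    have h1 : ∀ t ∈ {t | codedRel x (g cS) t}, g (iotaSlot t) ∈ Set.range nu :=
      fun t ht => (h t t).1 ht
    have h2 : Set.InjOn (fun t => g (iotaSlot t)) {t | codedRel x (g cS) t} := by
      intro a ha b hb hab
      by_contra hne
      exact (h a b).2 ha hb hne hab
    apply Set.countable_iff_exists_injOn.mpr
    refine ⟨fun t => natOf (g (iotaSlot t)), ?_⟩
    intro a ha b hb heq
    obtain ⟨na, hna⟩ := h1 a ha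
    obtain ⟨nb, hnb⟩ := h1 b hb
    have heq' : natOf (g (iotaSlot a)) = natOf (g (iotaSlot b)) := heq
    rw [← hna, ← hnb, natOf_nu, natOf_nu] at heq'
    exact h2 ha hb (by show g (iotaSlot a) = g (iotaSlot b); rw [← hna, ← hnb, heq'])
  · have hchain : IsChainIn (codedRel x) (Set.range fun i => g (chainSlot i)) := by
      rintro a ⟨i, rfl⟩ b ⟨j, rfl⟩
      rcases eq_or_ne i j with rfl | hne
      · exact Or.inl rfl
      · exact Or.inr ((h i j hne).2)
    have hct := hSus.1.2 _ hchain
    have hinj : Function.Injective fun i => g (chainSlot i) := by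
      intro i j hij
      by_contra hne
      exact (h i j hne).1 hij
    exact absurd hct (not_countable_of_inj hinj fun i => Set.mem_range_self i)
  · have hanti : IsAntichainIn (codedRel x) (Set.range fun i => g (antiSlot i)) := by
      rintro a ⟨i, rfl⟩ b ⟨j, rfl⟩ hab
      have hij : i ≠ j := fun e => hab (by rw [e])
      exact ⟨(h i j hij).2.1, (h i j hij).2.2⟩
    have hct := hSus.2 _ hanti
    have hinj : Function.Injective fun i => g (antiSlot i) := by
      intro i j hij
      by_contra hne
      exact (h i j hne).1 hij
    exact absurd hct (not_countable_of_inj hinj fun i => Set.mem_range_self i)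

/-! ### Completeness: a failure can always be witnessed -/

theorem complete {x : Omega1 → Bool}
    (hx : ¬ (IsRegularTreeCode x ∧ IsSuslinTree (codedRel x))) :
    ∃ g : Omega1 → Omega1, W x g := by
  by_cases hTr : ∀ a b c, codedRel x a b → codedRel x b c → codedRel x a c
  swap
  · push_neg at hTr
    obtain ⟨a, b, c, h1, h2, h3⟩ := hTr
    set g : Omega1 → Omega1 := fun i => if i = cS then a else if i = c1 then b else c
      with hgdef
    have e1 : g cS = a := by rw [hgdef]; simp
    have e2 : g c1 = b := by rw [hgdef]; simp [c1_ne_cS]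
    have e3 : g c2 = c := by rw [hgdef]; simp [c2_ne_cS, c2_ne_c1]
    refine ⟨g, Or.inl ?_⟩
    rw [V1, e1, e2, e3]
    exact ⟨h1, h2, h3⟩
  by_cases hIr : ∀ a, ¬ codedRel x a a
  swap
  · push_neg at hIr
    obtain ⟨a, ha⟩ := hIr
    exact ⟨fun _ => a, Or.inr (Or.inl ha)⟩
  by_cases hTri : ∀ a b c, codedRel x a c → codedRel x b c →
      (codedRel x a b ∨ a = b ∨ codedRel x b a)
  swap
  · push_neg at hTri
    obtain ⟨a, b, c, h1, h2, h3, h4, h5⟩ := hTri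
    set g : Omega1 → Omega1 := fun i => if i = cS then a else if i = c1 then b else c
      with hgdef
    have e1 : g cS = a := by rw [hgdef]; simp
    have e2 : g c1 = b := by rw [hgdef]; simp [c1_ne_cS]
    have e3 : g c2 = c := by rw [hgdef]; simp [c2_ne_cS, c2_ne_c1]
    refine ⟨g, Or.inr (Or.inr (Or.inl ?_))⟩
    rw [V3, e1, e2, e3]
    exact ⟨h1, h2, h3, h4, h5⟩
  by_cases hWO : ∀ c, ∀ S : Set Omega1, (∀ a ∈ S, codedRel x a c) → S.Nonempty →
      ∃ m ∈ S, ∀ a ∈ S, m = a ∨ codedRel x m a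
  swap
  · push_neg at hWO
    obtain ⟨c, S, hSc, hSne, hnomin⟩ := hWO
    have step : ∀ m : S, ∃ a : S, codedRel x a.1 m.1 := by
      rintro ⟨m, hm⟩
      obtain ⟨a, ha, hne, hnr⟩ := hnomin m hm
      rcases hTri a m c (hSc a ha) (hSc m hm) with h' | h' | h'
      · exact ⟨⟨a, ha⟩, h'⟩
      · exact absurd h' hne.symm
      · exact absurd h' hnr
    choose next hnext using step
    obtain ⟨s0, hs0⟩ := hSne
    set sq : ℕ → S := fun n => next^[n] ⟨s0, hs0⟩ with hsq
    have hdesc : ∀ n, codedRel x (sq (n+1)).1 (sq n).1 := by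
      intro n
      rw [hsq]
      simp only [Function.iterate_succ_apply']
      exact hnext _
    set g : Omega1 → Omega1 :=
      fun i => if i = cS then c else (sq (natOf (pairEquiv.symm i).2)).1 with hg
    have egS : g cS = c := by rw [hg]; simp
    have egn : ∀ n, g (seqSlot n) = (sq n).1 := by
      intro n
      simp only [hg]
      rw [if_neg (seqSlot_ne_cS n)]
      simp only [seqSlot, pc_symm, natOf_nu]
    refine ⟨g, Or.inr (Or.inr (Or.inr (Or.inl fun n => ?_)))⟩
    rw [egS, egn, egn]
    exact ⟨hSc _ (sq n).2, hdesc n⟩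
  have hT : IsTreeOrder (codedRel x) := ⟨hTr, hIr, hTri, hWO⟩
  by_cases hS1 : ∀ c : Set Omega1, IsChainIn (codedRel x) c → c.Countable
  swap
  · push_neg at hS1
    obtain ⟨C, hchain, hnc⟩ := hS1
    obtain ⟨f, hinj, hmem⟩ := exists_inj_of_not_countable hnc
    set g : Omega1 → Omega1 := fun i => f (pairEquiv.symm i).2 with hg
    have eg : ∀ i, g (chainSlot i) = f i := by
      intro i
      simp only [hg, chainSlot, pc_symm]
    refine ⟨g, Or.inr (Or.inr (Or.inr (Or.inr (Or.inr (Or.inr (Or.inr (Or.inl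
      fun i j hne => ?_)))))))⟩
    rw [eg, eg]
    have hne' : f i ≠ f j := fun e => hne (hinj e)
    rcases hchain (f i) (hmem i) (f j) (hmem j) with h' | h'
    · exact absurd h' hne'
    · exact ⟨hne', h'⟩
  by_cases hS2 : ∀ c : Set Omega1, IsAntichainIn (codedRel x) c → c.Countable
  swap
  · push_neg at hS2
    obtain ⟨C, hanti, hnc⟩ := hS2
    obtain ⟨f, hinj, hmem⟩ := exists_inj_of_not_countable hnc
    set g : Omega1 → Omega1 := fun i => f (pairEquiv.symm i).2 with hg
    have eg : ∀ i, g (antiSlot i) = f i := by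
      intro i
      simp only [hg, antiSlot, pc_symm]
    refine ⟨g, Or.inr (Or.inr (Or.inr (Or.inr (Or.inr (Or.inr (Or.inr (Or.inr
      fun i j hne => ?_)))))))⟩
    rw [eg, eg]
    have hne' : f i ≠ f j := fun e => hne (hinj e)
    obtain ⟨h1, h2⟩ := hanti (f i) (hmem i) (f j) (hmem j) hne'
    exact ⟨hne', h1, h2⟩
  by_cases hRoot : ∃ rt, ∀ a, a = rt ∨ codedRel x rt a
  swap
  · push_neg at hRoot
    have hw : ∀ rt, ∃ a, a ≠ rt ∧ ¬ codedRel x rt a := by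
      intro rt
      obtain ⟨a, ha⟩ := hRoot rt
      exact ⟨a, ha.1, ha.2⟩
    choose w hw1 hw2 using hw
    set g : Omega1 → Omega1 := fun i => w (pairEquiv.symm i).2 with hg
    have eg : ∀ a, g (rootSlot a) = w a := by
      intro a
      simp only [hg, rootSlot, pc_symm]
    refine ⟨g, Or.inr (Or.inr (Or.inr (Or.inr (Or.inl fun a => ?_))))⟩
    rw [eg]
    exact ⟨hw1 a, hw2 a⟩
  by_cases hBin : ∀ s, ∃ t₁ t₂, t₁ ≠ t₂ ∧ ImmSucc (codedRel x) s t₁ ∧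
      ImmSucc (codedRel x) s t₂
  swap
  · push_neg at hBin
    obtain ⟨s, hs⟩ := hBin
    set u : Omega1 → Omega1 := fun t =>
      if h : ∃ v, codedRel x s v ∧ codedRel x v t then h.choose else t with hu
    have husp : ∀ t, (∃ v, codedRel x s v ∧ codedRel x v t) →
        codedRel x s (u t) ∧ codedRel x (u t) t := by
      intro t h
      rw [hu]
      simp only [dif_pos h]
      exact h.choose_spec
    set g : Omega1 → Omega1 :=
      fun i => if i = cS then s else u (pairEquiv.symm i).2 with hg
    have egS : g cS = s := by rw [hg]; simp
    have egu : ∀ t, g (uSlot t) = u t := by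
      intro t
      simp only [hg]
      rw [if_neg (uSlot_ne_cS t)]
      simp only [uSlot, pc_symm]
    refine ⟨g, Or.inr (Or.inr (Or.inr (Or.inr (Or.inr (Or.inl
      fun t₁ t₂ hne => ?_)))))⟩
    rw [egS, egu, egu]
    have h'' : ¬ (ImmSucc (codedRel x) s t₁ ∧ ImmSucc (codedRel x) s t₂) :=
      fun hcon => hs t₁ t₂ hne hcon.1 hcon.2
    rcases not_and_or.mp h'' with h3 | h3
    · rcases not_and_or.mp h3 with h4 | h4
      · exact Or.inl h4
      · rcases not_not.mp h4 with ⟨v, hv⟩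
        exact Or.inr (Or.inr (Or.inl (husp t₁ ⟨v, hv⟩)))
    · rcases not_and_or.mp h3 with h4 | h4
      · exact Or.inr (Or.inl h4)
      · rcases not_not.mp h4 with ⟨v, hv⟩
        exact Or.inr (Or.inr (Or.inr (husp t₂ ⟨v, hv⟩)))
  by_cases hPr : ∀ s, ∀ γ : Ordinal, treeHeight (codedRel x) s < γ →
      γ < omega1Ord → ∃ t, codedRel x s t ∧ treeHeight (codedRel x) t = γ
  swap
  · push_neg at hPr
    obtain ⟨s, γ, hsγ, hγ, hno⟩ := hPr
    have hK := above_countable_of_unpruned hT hS2 hγ hsγ hno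
    obtain ⟨ι, hι1, hι2⟩ := exists_iota hK
    set g : Omega1 → Omega1 :=
      fun i => if i = cS then s else ι (pairEquiv.symm i).2 with hg
    have egS : g cS = s := by rw [hg]; simp
    have egi : ∀ a, g (iotaSlot a) = ι a := by
      intro a
      simp only [hg]
      rw [if_neg (iotaSlot_ne_cS a)]
      simp only [iotaSlot, pc_symm]
    refine ⟨g, Or.inr (Or.inr (Or.inr (Or.inr (Or.inr (Or.inr (Or.inl
      fun a b => ?_))))))⟩
    rw [egS, egi, egi]
    exact ⟨fun ha => hι1 a ha, fun ha hb hne heq => hne (hι2 ha hb heq)⟩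
  exfalso
  apply hx
  have hEmpty : ∀ ξ : Ordinal, omega1Ord ≤ ξ → treeLevel (codedRel x) ξ = ∅ := by
    intro ξ hξ
    apply Set.eq_empty_iff_forall_notMem.mpr
    intro b hb
    have hb' : treeHeight (codedRel x) b = ξ := hb
    have hlt := treeHeight_lt_omega1 hT (hS1 _ (pred_isChain hT b))
    rw [hb'] at hlt
    exact absurd hξ (not_le.mpr hlt)
  have hCt : ∀ ξ : Ordinal, (treeLevel (codedRel x) ξ).Countable :=
    fun ξ => hS2 _ (level_isAntichain hT ξ)
  have hNe : ∀ ξ : Ordinal, ξ < omega1Ord → (treeLevel (codedRel x) ξ).Nonempty := by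
    intro ξ hξ
    obtain ⟨rt, hrt⟩ := hRoot
    have h0 : treeHeight (codedRel x) rt = 0 := treeHeight_eq_zero_of_root hT hrt
    rcases eq_or_ne ξ 0 with rfl | hne
    · exact ⟨rt, h0⟩
    · obtain ⟨t, _, ht⟩ := hPr rt ξ (by rw [h0]; exact pos_iff_ne_zero.mpr hne) hξ
      exact ⟨t, ht⟩
  have hA1 : IsAleph1Tree (codedRel x) := ⟨hT, hCt, hNe, hEmpty⟩
  exact ⟨⟨hA1, hRoot, hBin, hPr⟩, ⟨hA1, hS1⟩, hS2⟩

end St2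
namespace St2

attribute [local instance] Classical.propDecidable

lemma crel_iff {x x' : Omega1 → Bool} {a b : Omega1}
    (h : x' (pairEquiv (a, b)) = x (pairEquiv (a, b))) :
    codedRel x' a b ↔ codedRel x a b := by
  unfold codedRel
  rw [h]

/-- A property of `(x, g)` which holds on a basic neighbourhood with finite support. -/
def StableAt (P : (Omega1 → Bool) → (Omega1 → Omega1) → Prop)
    (x : Omega1 → Bool) (g : Omega1 → Omega1) : Prop :=
  ∃ Fx Fg : Finset Omega1, ∀ x' g', (∀ i ∈ Fx, x' i = x i) →
    (∀ i ∈ Fg, g' i = g i) → P x' g'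

lemma StableAt.and {P Q : (Omega1 → Bool) → (Omega1 → Omega1) → Prop}
    {x : Omega1 → Bool} {g : Omega1 → Omega1}
    (hP : StableAt P x g) (hQ : StableAt Q x g) :
    StableAt (fun x g => P x g ∧ Q x g) x g := by
  obtain ⟨F1, G1, h1⟩ := hP
  obtain ⟨F2, G2, h2⟩ := hQ
  exact ⟨F1 ∪ F2, G1 ∪ G2, fun x' g' hx hg =>
    ⟨h1 x' g' (fun i hi => hx i (Finset.mem_union_left _ hi))
        (fun i hi => hg i (Finset.mem_union_left _ hi)),
     h2 x' g' (fun i hi => hx i (Finset.mem_union_right _ hi))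
        (fun i hi => hg i (Finset.mem_union_right _ hi))⟩⟩

lemma StableAt.mono {P Q : (Omega1 → Bool) → (Omega1 → Omega1) → Prop}
    {x : Omega1 → Bool} {g : Omega1 → Omega1}
    (hs : StableAt P x g) (h : ∀ x g, P x g → Q x g) : StableAt Q x g := by
  obtain ⟨F1, G1, h1⟩ := hs
  exact ⟨F1, G1, fun x' g' hx hg => h _ _ (h1 x' g' hx hg)⟩

lemma stable_nV1 {x : Omega1 → Bool} {g : Omega1 → Omega1} (h : ¬ V1 x g) :
    StableAt (fun x g => ¬ V1 x g) x g := by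
  refine ⟨{pairEquiv (g cS, g c1), pairEquiv (g c1, g c2), pairEquiv (g cS, g c2)},
    {cS, c1, c2}, fun x' g' hx hg hV => h ?_⟩
  have e1 : g' cS = g cS := hg _ (by simp)
  have e2 : g' c1 = g c1 := hg _ (by simp)
  have e3 : g' c2 = g c2 := hg _ (by simp)
  obtain ⟨a1, a2, a3⟩ := hV
  rw [e1, e2] at a1
  rw [e2, e3] at a2
  rw [e1, e3] at a3
  refine ⟨(crel_iff (hx _ (by simp))).mp a1, (crel_iff (hx _ (by simp))).mp a2,
    fun hc => a3 ((crel_iff (hx _ (by simp))).mpr hc)⟩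

lemma stable_nV2 {x : Omega1 → Bool} {g : Omega1 → Omega1} (h : ¬ V2 x g) :
    StableAt (fun x g => ¬ V2 x g) x g := by
  refine ⟨{pairEquiv (g cS, g cS)}, {cS}, fun x' g' hx hg hV => h ?_⟩
  have e1 : g' cS = g cS := hg _ (by simp)
  rw [V2, e1] at hV
  exact (crel_iff (hx _ (by simp))).mp hV

lemma stable_nV3 {x : Omega1 → Bool} {g : Omega1 → Omega1} (h : ¬ V3 x g) :
    StableAt (fun x g => ¬ V3 x g) x g := by
  refine ⟨{pairEquiv (g cS, g c2), pairEquiv (g c1, g c2), pairEquiv (g cS, g c1),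
    pairEquiv (g c1, g cS)}, {cS, c1, c2}, fun x' g' hx hg hV => h ?_⟩
  have e1 : g' cS = g cS := hg _ (by simp)
  have e2 : g' c1 = g c1 := hg _ (by simp)
  have e3 : g' c2 = g c2 := hg _ (by simp)
  obtain ⟨a1, a2, a3, a4, a5⟩ := hV
  rw [e1, e3] at a1
  rw [e2, e3] at a2
  rw [e1, e2] at a3
  rw [e1, e2] at a4
  rw [e2, e1] at a5
  exact ⟨(crel_iff (hx _ (by simp))).mp a1, (crel_iff (hx _ (by simp))).mp a2,
    fun hc => a3 ((crel_iff (hx _ (by simp))).mpr hc), a4,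
    fun hc => a5 ((crel_iff (hx _ (by simp))).mpr hc)⟩

lemma stable_nV4 {x : Omega1 → Bool} {g : Omega1 → Omega1} (h : ¬ V4 x g) :
    StableAt (fun x g => ¬ V4 x g) x g := by
  obtain ⟨n, hn⟩ := not_forall.mp h
  refine ⟨{pairEquiv (g (seqSlot n), g cS),
    pairEquiv (g (seqSlot (n+1)), g (seqSlot n))},
    {cS, seqSlot n, seqSlot (n+1)}, fun x' g' hx hg hV => hn ?_⟩
  have e1 : g' cS = g cS := hg _ (by simp)
  have e2 : g' (seqSlot n) = g (seqSlot n) := hg _ (by simp)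
  have e3 : g' (seqSlot (n+1)) = g (seqSlot (n+1)) := hg _ (by simp)
  obtain ⟨a1, a2⟩ := hV n
  rw [e2, e1] at a1
  rw [e3, e2] at a2
  exact ⟨(crel_iff (hx _ (by simp))).mp a1, (crel_iff (hx _ (by simp))).mp a2⟩

lemma stable_nV5 {x : Omega1 → Bool} {g : Omega1 → Omega1} (h : ¬ V5 x g) :
    StableAt (fun x g => ¬ V5 x g) x g := by
  obtain ⟨a, hn⟩ := not_forall.mp h
  refine ⟨{pairEquiv (a, g (rootSlot a))}, {rootSlot a}, fun x' g' hx hg hV => hn ?_⟩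
  have e1 : g' (rootSlot a) = g (rootSlot a) := hg _ (by simp)
  obtain ⟨a1, a2⟩ := hV a
  rw [e1] at a1 a2
  exact ⟨a1, fun hc => a2 ((crel_iff (hx _ (by simp))).mpr hc)⟩

lemma stable_nV6 {x : Omega1 → Bool} {g : Omega1 → Omega1} (h : ¬ V6 x g) :
    StableAt (fun x g => ¬ V6 x g) x g := by
  obtain ⟨t₁, hh⟩ := not_forall.mp h
  obtain ⟨t₂, hn⟩ := not_forall.mp hh
  refine ⟨{pairEquiv (g cS, t₁), pairEquiv (g cS, t₂),
    pairEquiv (g cS, g (uSlot t₁)), pairEquiv (g (uSlot t₁), t₁),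
    pairEquiv (g cS, g (uSlot t₂)), pairEquiv (g (uSlot t₂), t₂)},
    {cS, uSlot t₁, uSlot t₂}, fun x' g' hx hg hV => hn ?_⟩
  intro hne
  have e1 : g' cS = g cS := hg _ (by simp)
  have e2 : g' (uSlot t₁) = g (uSlot t₁) := hg _ (by simp)
  have e3 : g' (uSlot t₂) = g (uSlot t₂) := hg _ (by simp)
  rcases hV t₁ t₂ hne with a | a | a | a
  · rw [e1] at a
    exact Or.inl fun hc => a ((crel_iff (hx _ (by simp))).mpr hc)
  · rw [e1] at a
    exact Or.inr (Or.inl fun hc => a ((crel_iff (hx _ (by simp))).mpr hc))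
  · obtain ⟨a1, a2⟩ := a
    rw [e1, e2] at a1
    rw [e2] at a2
    exact Or.inr (Or.inr (Or.inl ⟨(crel_iff (hx _ (by simp))).mp a1,
      (crel_iff (hx _ (by simp))).mp a2⟩))
  · obtain ⟨a1, a2⟩ := a
    rw [e1, e3] at a1
    rw [e3] at a2
    exact Or.inr (Or.inr (Or.inr ⟨(crel_iff (hx _ (by simp))).mp a1,
      (crel_iff (hx _ (by simp))).mp a2⟩))

lemma stable_nV7 {x : Omega1 → Bool} {g : Omega1 → Omega1} (h : ¬ V7 x g) :
    StableAt (fun x g => ¬ V7 x g) x g := by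
  obtain ⟨a, hh⟩ := not_forall.mp h
  obtain ⟨b, hn⟩ := not_forall.mp hh
  refine ⟨{pairEquiv (g cS, a), pairEquiv (g cS, b)},
    {cS, iotaSlot a, iotaSlot b}, fun x' g' hx hg hV => hn ?_⟩
  have e1 : g' cS = g cS := hg _ (by simp)
  have e2 : g' (iotaSlot a) = g (iotaSlot a) := hg _ (by simp)
  have e3 : g' (iotaSlot b) = g (iotaSlot b) := hg _ (by simp)
  constructor
  · intro ha
    have ha' : codedRel x' (g' cS) a := by
      rw [e1]
      exact (crel_iff (hx _ (by simp))).mpr ha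
    have := (hV a b).1 ha'
    rwa [e2] at this
  · intro ha hb hne
    have ha' : codedRel x' (g' cS) a := by
      rw [e1]
      exact (crel_iff (hx _ (by simp))).mpr ha
    have hb' : codedRel x' (g' cS) b := by
      rw [e1]
      exact (crel_iff (hx _ (by simp))).mpr hb
    have := (hV a b).2 ha' hb' hne
    rwa [e2, e3] at this

lemma stable_nV8 {x : Omega1 → Bool} {g : Omega1 → Omega1} (h : ¬ V8 x g) :
    StableAt (fun x g => ¬ V8 x g) x g := by
  obtain ⟨i, hh⟩ := not_forall.mp h
  obtain ⟨j, hn⟩ := not_forall.mp hh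
  refine ⟨{pairEquiv (g (chainSlot i), g (chainSlot j)),
    pairEquiv (g (chainSlot j), g (chainSlot i))},
    {chainSlot i, chainSlot j}, fun x' g' hx hg hV => hn ?_⟩
  intro hne
  have e1 : g' (chainSlot i) = g (chainSlot i) := hg _ (by simp)
  have e2 : g' (chainSlot j) = g (chainSlot j) := hg _ (by simp)
  obtain ⟨a1, a2⟩ := hV i j hne
  rw [e1, e2] at a1
  refine ⟨a1, ?_⟩
  rcases a2 with a | a
  · rw [e1, e2] at a
    exact Or.inl ((crel_iff (hx _ (by simp))).mp a)
  · rw [e1, e2] at a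
    exact Or.inr ((crel_iff (hx _ (by simp))).mp a)

lemma stable_nV9 {x : Omega1 → Bool} {g : Omega1 → Omega1} (h : ¬ V9 x g) :
    StableAt (fun x g => ¬ V9 x g) x g := by
  obtain ⟨i, hh⟩ := not_forall.mp h
  obtain ⟨j, hn⟩ := not_forall.mp hh
  refine ⟨{pairEquiv (g (antiSlot i), g (antiSlot j)),
    pairEquiv (g (antiSlot j), g (antiSlot i))},
    {antiSlot i, antiSlot j}, fun x' g' hx hg hV => hn ?_⟩
  intro hne
  have e1 : g' (antiSlot i) = g (antiSlot i) := hg _ (by simp)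
  have e2 : g' (antiSlot j) = g (antiSlot j) := hg _ (by simp)
  obtain ⟨a1, a2, a3⟩ := hV i j hne
  rw [e1, e2] at a1
  rw [e1, e2] at a2
  rw [e2, e1] at a3
  exact ⟨a1, fun hc => a2 ((crel_iff (hx _ (by simp))).mpr hc),
    fun hc => a3 ((crel_iff (hx _ (by simp))).mpr hc)⟩

lemma stable_notW {x : Omega1 → Bool} {g : Omega1 → Omega1} (h : ¬ W x g) :
    StableAt (fun x g => ¬ W x g) x g := by
  simp only [W, not_or] at h
  obtain ⟨n1, n2, n3, n4, n5, n6, n7, n8, n9⟩ := h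
  have S := ((((((((stable_nV1 n1).and (stable_nV2 n2)).and (stable_nV3 n3)).and
    (stable_nV4 n4)).and (stable_nV5 n5)).and (stable_nV6 n6)).and
    (stable_nV7 n7)).and (stable_nV8 n8)).and (stable_nV9 n9)
  refine S.mono fun x' g' hh => ?_
  obtain ⟨⟨⟨⟨⟨⟨⟨⟨a1, a2⟩, a3⟩, a4⟩, a5⟩, a6⟩, a7⟩, a8⟩, a9⟩ := hh
  simp only [W, not_or]
  exact ⟨a1, a2, a3, a4, a5, a6, a7, a8, a9⟩

/-! ### Openness of the witness-free region -/

lemma isOpen_goodSet :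
    (@instTopologicalSpaceProd (Omega1 → Bool) (Omega1 → Omega1)
        (gbsTop Omega1 Bool) (gbsTop Omega1 Omega1)).IsOpen
      {z : (Omega1 → Bool) × (Omega1 → Omega1) | ¬ W z.1 z.2} := by
  letI t1 : TopologicalSpace (Omega1 → Bool) := gbsTop Omega1 Bool
  letI t2 : TopologicalSpace (Omega1 → Omega1) := gbsTop Omega1 Omega1
  show @IsOpen _ (@instTopologicalSpaceProd _ _ t1 t2)
    {z : (Omega1 → Bool) × (Omega1 → Omega1) | ¬ W z.1 z.2}
  rw [isOpen_iff_forall_mem_open]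
  rintro ⟨x, g⟩ hz
  obtain ⟨Fx, Fg, hst⟩ := stable_notW hz
  refine ⟨gbsBasic (fun i => if i ∈ Fx then some (x i) else none) ×ˢ
      gbsBasic (fun i => if i ∈ Fg then some (g i) else none), ?_, ?_, ?_, ?_⟩
  · rintro ⟨x', g'⟩ ⟨hx', hg'⟩
    exact hst x' g' (fun i hi => hx' i (x i) (by simp only [if_pos hi]))
      (fun i hi => hg' i (g i) (by simp only [if_pos hi]))
  · apply IsOpen.prod
    · refine TopologicalSpace.isOpen_generateFrom_of_mem ⟨_, ?_, rfl⟩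
      refine Set.Countable.mono ?_ Fx.countable_toSet
      intro i hi
      by_contra hmem
      rw [Finset.mem_coe] at hmem
      exact hi (if_neg hmem)
    · refine TopologicalSpace.isOpen_generateFrom_of_mem ⟨_, ?_, rfl⟩
      refine Set.Countable.mono ?_ Fg.countable_toSet
      intro i hi
      by_contra hmem
      rw [Finset.mem_coe] at hmem
      exact hi (if_neg hmem)
  · intro i y hy
    simp only [] at hy
    split_ifs at hy with hmem
    exact Option.some.inj hy
  · intro i y hy
    simp only [] at hy
    split_ifs at hy with hmem
    exact Option.some.inj hy

end St2

/-- The class of (codes of) regular Suslin trees is a `Π¹₁` subset of `2^{ω₁}`. -/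
theorem statement_2 :
    IsPi11 (gbsTop Omega1 Bool)
      {x : Omega1 → Bool | IsRegularTreeCode x ∧ IsSuslinTree (codedRel x)} := by
  refine ⟨{z | ¬ St2.W z.1 z.2}, St2.isOpen_goodSet, fun x => ?_⟩
  constructor
  · intro hx g
    exact St2.sound hx g
  · intro h
    by_contra hx
    obtain ⟨g, hg⟩ := St2.complete hx
    exact h g hg

end
end
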